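/- In the extended affine Weyl group W̃ of type C̃2, the conjugacy class of s₁s₂s₁s₂ (the longest element of W) equals { t^{2mΛ₁ + nΛ₂} s₁s₂s₁s₂ : m, n ∈ ℤ }. -/

import Mathlib

noncomputable section

open SemidirectProduct

/-- The coweight lattice `P` of `Sp₄` in coordinates `(ε₁, ε₂)`. -/
abbrev L : Type := ℤ × ℤ

/-- The simple reflection `s₁` (for `α₁ = ε₁ - ε₂`) acting on `P`: swap coordinates. -/
def s1lin : AddAut L := AddEquiv.prodComm

/-- The simple reflection `s₂` (for `α₂ = 2ε₂`) acting on `P`: negate second coordinate. -/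
def s2lin : AddAut L := AddEquiv.prodCongr (AddEquiv.refl ℤ) (AddEquiv.neg ℤ)

/-- The multiplicative group structure that `AddAut` carried in the older Mathlib
(now it is an additive group). -/
instance AddAut.oldGroup (A : Type) [Add A] : Group (AddAut A) where
  mul g h := AddEquiv.trans h g
  one := AddEquiv.refl _
  inv := AddEquiv.symm
  mul_assoc _ _ _ := rfl
  one_mul _ := rfl
  mul_one _ := rfl
  inv_mul_cancel := AddEquiv.self_trans_symm

def phi : AddAut L →* MulAut (Multiplicative L) where
  toFun w := AddEquiv.toMultiplicative w
  map_one' := rfl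
  map_mul' _ _ := rfl

/-- The ambient group `P ⋊ Aut(P)`, inside which the extended affine Weyl group
`W̃ = P ⋊ W` of type `C̃₂` lives. -/
abbrev G : Type := Multiplicative L ⋊[phi] AddAut L

/-- Translation element `t^λ`. -/
def t (l : L) : G := inl (Multiplicative.ofAdd l)

def s1 : G := inr s1lin
def s2 : G := inr s2lin

/-- `Λ₁ = α₁ + (1/2)α₂ = ε₁`. -/
def Lam1 : L := (1, 0)
/-- `Λ₂ = α₁ + α₂ = 2ε₂`. -/
def Lam2 : L := (0, 2)
/-- `ε₂ = (1/2)(α₁ + α₂)`. -/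
def eps2 : L := (0, 1)

/-- The affine simple reflection `s₀ = t^{Λ₁} s₁s₂s₁`. -/
def s0 : G := t Lam1 * s1 * s2 * s1
/-- The nontrivial length-zero element `τ = t^{ε₂} s₂s₁s₂`. -/
def tau : G := t eps2 * s2 * s1 * s2
/-- The longest element `w₀ = s₁s₂s₁s₂` of `W`. -/
def w0 : G := s1 * s2 * s1 * s2

/-- The extended affine Weyl group `W̃ = W_a ⋊ Ω` of type `C̃₂`, as a subgroup. -/
def Wtilde : Subgroup G := Subgroup.closure {s0, s1, s2, tau}

/-- The finite Weyl group `W` of type `C₂`, as a group of automorphisms of `P`. -/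
def Wfin : Subgroup (AddAut L) := Subgroup.closure {s1lin, s2lin}

/-- The conjugacy class of `g` under conjugation by the extended affine Weyl group. -/
def conjClass (g : G) : Set G := {h | ∃ x ∈ Wtilde, h = x * g * x⁻¹}

/-- The translation `t^{mΛ₁ + nΛ₂}` for an element `mΛ₁ + nΛ₂` of the coroot lattice `Q`. -/
def tQ (m n : ℤ) : G := t (m • Lam1 + n • Lam2)

end

noncomputable section
open SemidirectProduct

def negA : AddAut L := AddEquiv.neg L

lemma w0_eq : w0 = inr negA := by
  show inr s1lin * inr s2lin * inr s1lin * inr s2lin = inr negA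
  rw [← map_mul, ← map_mul, ← map_mul]
  exact congrArg inr (AddEquiv.ext fun x => rfl)

lemma negA_conj (u : AddAut L) : u * negA * u⁻¹ = negA := by
  refine AddEquiv.ext fun x => ?_
  show u (negA (u⁻¹ x)) = negA x
  show u (-(u⁻¹ x)) = -x
  rw [map_neg]
  simp
  exact u.apply_symm_apply x

lemma conj_w0 (x : G) : x * w0 * x⁻¹ = inl (x.left * x.left) * w0 := by
  conv_lhs => rw [← inl_left_mul_inr_right x]
  rw [w0_eq, mul_inv_rev, ← map_inv, ← map_inv]
  have : (inl x.left : G) * inr x.right * inr negA * (inr x.right⁻¹ * inl x.left⁻¹)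
      = inl x.left * inr (x.right * negA * x.right⁻¹) * inl x.left⁻¹ := by
    simp only [map_mul, map_inv, mul_assoc]
  rw [this, negA_conj]
  have h2 : (inr negA : G) * inl x.left⁻¹ = inl (phi negA x.left⁻¹) * inr negA := by
    rw [inl_aut negA x.left⁻¹, mul_assoc, mul_assoc, ← map_mul, inv_mul_cancel, map_one, mul_one]
  rw [mul_assoc, h2, ← mul_assoc, ← map_mul]
  congr 2
  show x.left * Multiplicative.ofAdd (-(-(Multiplicative.toAdd x.left))) = x.left * x.left
  rw [neg_neg]
  rfl

lemma s0_mem : s0 ∈ Wtilde := Subgroup.subset_closure (by simp)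
lemma s1_mem : s1 ∈ Wtilde := Subgroup.subset_closure (by simp)
lemma s2_mem : s2 ∈ Wtilde := Subgroup.subset_closure (by simp)
lemma tau_mem : tau ∈ Wtilde := Subgroup.subset_closure (by simp)

lemma tLam1_mem : t Lam1 ∈ Wtilde := by
  have h : t Lam1 = s0 * s1⁻¹ * s2⁻¹ * s1⁻¹ := by rw [s0]; group
  rw [h]
  exact mul_mem (mul_mem (mul_mem s0_mem (inv_mem s1_mem)) (inv_mem s2_mem)) (inv_mem s1_mem)

lemma teps2_mem : t eps2 ∈ Wtilde := by
  have h : t eps2 = tau * s2⁻¹ * s1⁻¹ * s2⁻¹ := by rw [tau]; group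
  rw [h]
  exact mul_mem (mul_mem (mul_mem tau_mem (inv_mem s2_mem)) (inv_mem s1_mem)) (inv_mem s2_mem)

lemma t_add (a b : L) : t (a + b) = t a * t b := by
  rw [t, t, t, ← map_mul]; rfl

lemma t_zsmul (k : ℤ) (l : L) : t (k • l) = t l ^ k := by
  rw [t, t, ← map_zpow]
  rfl

lemma t_mem (l : L) : t l ∈ Wtilde := by
  have h : l = l.1 • Lam1 + l.2 • eps2 := by
    simp [Lam1, eps2, Prod.ext_iff]
  rw [h, t_add, t_zsmul, t_zsmul]
  exact mul_mem (zpow_mem tLam1_mem _) (zpow_mem teps2_mem _)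

lemma tQ_eq (m n : ℤ) : tQ (2 * m) n = t (2 * m, 2 * n) := by
  rw [tQ]
  congr 1
  simp [Lam1, Lam2, Prod.ext_iff, mul_comm]

lemma left_sq (a : Multiplicative L) :
    (inl (a * a) : G) = t (2 * (Multiplicative.toAdd a).1, 2 * (Multiplicative.toAdd a).2) := by
  rw [t]
  congr 1
  show Multiplicative.ofAdd (Multiplicative.toAdd a + Multiplicative.toAdd a) = _
  congr 1
  exact Prod.ext (by simp [two_mul]) (by simp [two_mul])

end

/-- The conjugacy class of the longest element `s₁s₂s₁s₂` of `W` equals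
`{ t^{2mΛ₁+nΛ₂} s₁s₂s₁s₂ : m, n ∈ ℤ }`. -/
theorem conjClass_w0 :
    conjClass w0 = {g : G | ∃ m n : ℤ, g = tQ (2 * m) n * w0} := by
  ext g
  constructor
  · rintro ⟨x, -, rfl⟩
    exact ⟨(Multiplicative.toAdd x.left).1, (Multiplicative.toAdd x.left).2,
      by rw [conj_w0, tQ_eq, left_sq]⟩
  · rintro ⟨m, n, rfl⟩
    refine ⟨t (m, n), t_mem _, ?_⟩
    rw [conj_w0, left_sq, tQ_eq]
    rfl
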